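/- Closed-form marginal of the DDPM forward process: let x₀ ∈ ℝ, let T be a positive natural number and β₁, …, β_T ∈ (0,1). On a probability space, let X₀ = x₀ almost surely, and for each t ∈ {1, …, T} let X_t = √(1−β_t)·X_{t−1} + √(β_t)·E_t, where E_t is a standard Gaussian random variable (law N(0,1)) independent of X_{t−1}. Then for every t ∈ {1, …, T}, the law of X_t is the real Gaussian measure with mean √(ā_t)·x₀ and variance 1 − ā_t, where ā_t = ∏_{s=1}^{t} (1 − β_s). -/

import Mathlib

open ProbabilityTheory MeasureTheory
open Real
open scoped NNReal ENNReal

namespace DDPMAux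

lemma pdf_conv (m1 m2 z : ℝ) {v1 v2 : ℝ≥0} (h1 : v1 ≠ 0) (h2 : v2 ≠ 0) :
    ∫ x, gaussianPDFReal m1 v1 x * gaussianPDFReal (m2 + x) v2 z
      = gaussianPDFReal (m1 + m2) (v1 + v2) z := by
  have hv1 : (0:ℝ) < v1 := NNReal.coe_pos.mpr (pos_iff_ne_zero.mpr h1)
  have hv2 : (0:ℝ) < v2 := NNReal.coe_pos.mpr (pos_iff_ne_zero.mpr h2)
  have hv12 : (0:ℝ) < (v1:ℝ) + v2 := by linarith
  set a : ℝ := ((v1:ℝ) + v2) / (2 * v1 * v2) with ha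
  have hapos : 0 < a := by positivity
  set w : ℝ := z - m1 - m2 with hw
  set d : ℝ := m1 + (v1:ℝ) * w / ((v1:ℝ) + v2) with hd
  set K : ℝ := (Real.sqrt (2 * π * v1))⁻¹ * (Real.sqrt (2 * π * v2))⁻¹
      * Real.exp (-w ^ 2 / (2 * ((v1:ℝ) + v2))) with hK
  have hpt : ∀ x, gaussianPDFReal m1 v1 x * gaussianPDFReal (m2 + x) v2 z
      = K * Real.exp (-(a * (x - d) ^ 2)) := by
    intro x
    simp only [gaussianPDFReal]
    have hexp : -(x - m1) ^ 2 / (2 * (v1:ℝ)) + -(z - (m2 + x)) ^ 2 / (2 * (v2:ℝ))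
        = -w ^ 2 / (2 * ((v1:ℝ) + v2)) + -(a * (x - d) ^ 2) := by
      rw [hd, ha, hw]
      field_simp
      ring
    calc (√(2 * π * v1))⁻¹ * rexp (-(x - m1) ^ 2 / (2 * v1))
          * ((√(2 * π * v2))⁻¹ * rexp (-(z - (m2 + x)) ^ 2 / (2 * v2)))
        = (√(2 * π * v1))⁻¹ * (√(2 * π * v2))⁻¹
          * rexp (-(x - m1) ^ 2 / (2 * (v1:ℝ)) + -(z - (m2 + x)) ^ 2 / (2 * (v2:ℝ))) := by
          rw [Real.exp_add]; ring
      _ = K * rexp (-(a * (x - d) ^ 2)) := by rw [hexp, Real.exp_add, hK]; ring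
  simp_rw [hpt]
  rw [integral_const_mul]
  have hgauss : ∫ x, rexp (-(a * (x - d) ^ 2)) = Real.sqrt (π / a) := by
    have h := MeasureTheory.integral_sub_right_eq_self (μ := volume)
      (fun x => rexp (-(a * x ^ 2))) d
    rw [h]
    simp_rw [← neg_mul]
    exact integral_gaussian a
  rw [hgauss]
  have hconst : (√(2 * π * (v1:ℝ)))⁻¹ * (√(2 * π * (v2:ℝ)))⁻¹ * Real.sqrt (π / a)
      = (√(2 * π * ((v1:ℝ) + v2)))⁻¹ := by
    rw [ha, ← Real.sqrt_inv, ← Real.sqrt_inv, ← Real.sqrt_inv,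
      ← Real.sqrt_mul (by positivity), ← Real.sqrt_mul (by positivity)]
    congr 1
    field_simp
  simp only [gaussianPDFReal, NNReal.coe_add]
  have hexp2 : -(z - (m1 + m2)) ^ 2 / (2 * ((v1:ℝ) + v2))
      = -w ^ 2 / (2 * ((v1:ℝ) + v2)) := by rw [hw]; ring_nf
  rw [hexp2, hK, ← hconst]
  ring

lemma gaussianPDFReal_le (μ : ℝ) (v : ℝ≥0) (x : ℝ) :
    gaussianPDFReal μ v x ≤ (Real.sqrt (2 * π * v))⁻¹ := by
  rw [gaussianPDFReal]
  have h1 : rexp (-(x - μ) ^ 2 / (2 * v)) ≤ 1 := by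
    apply Real.exp_le_one_iff.mpr
    apply div_nonpos_of_nonpos_of_nonneg
    · simp [sq_nonneg]
    · positivity
  calc (√(2 * π * v))⁻¹ * rexp (-(x - μ) ^ 2 / (2 * v)) ≤ (√(2 * π * v))⁻¹ * 1 :=
        mul_le_mul_of_nonneg_left h1 (by positivity)
    _ = _ := mul_one _

lemma integrable_pdf_mul (m1 m2 z : ℝ) (v1 v2 : ℝ≥0) :
    Integrable (fun x => gaussianPDFReal m1 v1 x * gaussianPDFReal (m2 + x) v2 z) := by
  apply Integrable.mono' ((integrable_gaussianPDFReal m1 v1).mul_const (Real.sqrt (2 * π * v2))⁻¹)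
  · apply AEStronglyMeasurable.mul
    · exact (measurable_gaussianPDFReal m1 v1).aestronglyMeasurable
    · apply Measurable.aestronglyMeasurable
      have : Measurable fun x : ℝ => (√(2 * π * (v2:ℝ)))⁻¹ * rexp (-(z - (m2 + x)) ^ 2 / (2 * (v2:ℝ))) := by
        fun_prop
      exact this
  · refine Filter.Eventually.of_forall fun x => ?_
    rw [Real.norm_eq_abs, abs_of_nonneg (mul_nonneg (gaussianPDFReal_nonneg _ _ _)
      (gaussianPDFReal_nonneg _ _ _))]
    exact mul_le_mul_of_nonneg_left (gaussianPDFReal_le _ _ _) (gaussianPDFReal_nonneg _ _ _)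

lemma gaussianPDF_conv (m1 m2 z : ℝ) {v1 v2 : ℝ≥0} (h1 : v1 ≠ 0) (h2 : v2 ≠ 0) :
    ∫⁻ x, gaussianPDF m1 v1 x * gaussianPDF (m2 + x) v2 z
      = gaussianPDF (m1 + m2) (v1 + v2) z := by
  simp only [gaussianPDF]
  simp_rw [← ENNReal.ofReal_mul (gaussianPDFReal_nonneg m1 v1 _)]
  rw [← pdf_conv m1 m2 z h1 h2, ← ofReal_integral_eq_lintegral_ofReal
    (integrable_pdf_mul m1 m2 z v1 v2)
    (Filter.Eventually.of_forall fun x => mul_nonneg (gaussianPDFReal_nonneg _ _ _)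
      (gaussianPDFReal_nonneg _ _ _))]

lemma gaussian_conv (m1 m2 : ℝ) (v1 v2 : ℝ≥0) :
    Measure.map (fun p : ℝ × ℝ => p.1 + p.2)
      ((gaussianReal m1 v1).prod (gaussianReal m2 v2)) = gaussianReal (m1 + m2) (v1 + v2) := by
  by_cases h1 : v1 = 0
  · subst h1
    rw [gaussianReal_zero_var, Measure.dirac_prod,
      Measure.map_map measurable_add measurable_prodMk_left]
    have : (fun p : ℝ × ℝ => p.1 + p.2) ∘ Prod.mk m1 = (m1 + ·) := rfl
    rw [this, gaussianReal_map_const_add, add_comm m2 m1, zero_add]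
  by_cases h2 : v2 = 0
  · subst h2
    rw [gaussianReal_zero_var, Measure.prod_dirac,
      Measure.map_map measurable_add measurable_prodMk_right]
    have : (fun p : ℝ × ℝ => p.1 + p.2) ∘ (fun x => (x, m2)) = (· + m2) := rfl
    rw [this, gaussianReal_map_add_const, add_zero]
  -- main case
  have hmeas2 : Measurable (Function.uncurry fun x z =>
      gaussianPDF (m2 + x) v2 z) := by
    simp only [gaussianPDF, gaussianPDFReal, Function.uncurry]
    fun_prop
  ext s hs
  rw [Measure.map_apply measurable_add hs, Measure.prod_apply (measurable_add hs)]
  have hfib : ∀ x : ℝ, gaussianReal m2 v2 (Prod.mk x ⁻¹' ((fun p : ℝ × ℝ => p.1 + p.2) ⁻¹' s))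
      = ∫⁻ z in s, gaussianPDF (m2 + x) v2 z := by
    intro x
    have hpre : Prod.mk x ⁻¹' ((fun p : ℝ × ℝ => p.1 + p.2) ⁻¹' s) = (x + ·) ⁻¹' s := rfl
    rw [hpre, ← Measure.map_apply (measurable_const_add x) hs, gaussianReal_map_const_add,
      gaussianReal_apply _ h2 s]
  simp_rw [hfib]
  rw [gaussianReal_of_var_ne_zero m1 h1,
    lintegral_withDensity_eq_lintegral_mul _ (measurable_gaussianPDF m1 v1)
      (by exact hmeas2.lintegral_prod_right')]
  have hpush : ∀ x : ℝ, gaussianPDF m1 v1 x * ∫⁻ z in s, gaussianPDF (m2 + x) v2 z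
      = ∫⁻ z in s, gaussianPDF m1 v1 x * gaussianPDF (m2 + x) v2 z :=
    fun x => (lintegral_const_mul' _ _ ENNReal.ofReal_ne_top).symm
  simp only [Pi.mul_apply]
  simp_rw [hpush]
  rw [lintegral_lintegral_swap
    (((measurable_gaussianPDF m1 v1).comp measurable_fst).mul hmeas2).aemeasurable]
  rw [gaussianReal_apply _ (by simp [h1] : v1 + v2 ≠ 0) s]
  exact lintegral_congr fun z => gaussianPDF_conv m1 m2 z h1 h2

lemma map_const_mul' {Ω : Type*} [MeasureSpace Ω] {X : Ω → ℝ} (hX : Measurable X)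
    {μ : ℝ} {v : ℝ≥0} (h : Measure.map X ℙ = gaussianReal μ v) (c : ℝ) :
    Measure.map (fun ω => c * X ω) ℙ = gaussianReal (c * μ) (⟨c ^ 2, sq_nonneg _⟩ * v) := by
  have heq : (fun ω => c * X ω) = (c * ·) ∘ X := rfl
  rw [heq, ← Measure.map_map (measurable_const_mul c) hX, h, gaussianReal_map_const_mul]
  exact rfl

lemma indep_sum_gaussian {Ω : Type*} [MeasureSpace Ω] [IsProbabilityMeasure (ℙ : Measure Ω)]
    {X Y : Ω → ℝ} (hX : Measurable X) (hY : Measurable Y)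
    {m1 m2 : ℝ} {v1 v2 : ℝ≥0}
    (h1 : Measure.map X ℙ = gaussianReal m1 v1) (h2 : Measure.map Y ℙ = gaussianReal m2 v2)
    (hind : IndepFun X Y ℙ) :
    Measure.map (fun ω => X ω + Y ω) ℙ = gaussianReal (m1 + m2) (v1 + v2) := by
  have hpair := (indepFun_iff_map_prod_eq_prod_map_map hX.aemeasurable hY.aemeasurable).mp hind
  have heq : (fun ω => X ω + Y ω) = (fun p : ℝ × ℝ => p.1 + p.2) ∘ (fun ω => (X ω, Y ω)) := rfl
  rw [heq, ← Measure.map_map measurable_add (hX.prodMk hY), hpair, h1, h2, gaussian_conv]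

end DDPMAux

open DDPMAux

/-- Closed-form marginal of the DDPM forward process: if `X 0 = x₀` a.s. and for each
`t ∈ {1, …, T}` we have `X t = √(1−β t)·X (t−1) + √(β t)·E t` with `E t` a standard
Gaussian independent of `X (t−1)`, then the law of `X t` is Gaussian with mean
`√(ā t)·x₀` and variance `1 − ā t`, where `ā t = ∏_{s=1}^{t} (1 − β s)`. -/

theorem ddpm_forward_marginal {Ω : Type*} [MeasureSpace Ω]
    [IsProbabilityMeasure (ℙ : Measure Ω)]
    (x₀ : ℝ) (T : ℕ) (hT : 0 < T) (β : ℕ → ℝ)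
    (hβ : ∀ t, 1 ≤ t → t ≤ T → β t ∈ Set.Ioo (0 : ℝ) 1)
    (X E : ℕ → Ω → ℝ)
    (hXmeas : ∀ t, Measurable (X t)) (hEmeas : ∀ t, Measurable (E t))
    (hX0 : ∀ᵐ ω ∂ℙ, X 0 ω = x₀)
    (hE : ∀ t, 1 ≤ t → t ≤ T → Measure.map (E t) ℙ = gaussianReal 0 1)
    (hindep : ∀ t, 1 ≤ t → t ≤ T → IndepFun (X (t - 1)) (E t) ℙ)
    (hrec : ∀ t, 1 ≤ t → t ≤ T → ∀ ω,
      X t ω = Real.sqrt (1 - β t) * X (t - 1) ω + Real.sqrt (β t) * E t ω) :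
    ∀ t, 1 ≤ t → t ≤ T →
      Measure.map (X t) ℙ =
        gaussianReal (Real.sqrt (∏ s ∈ Finset.Icc 1 t, (1 - β s)) * x₀)
          (1 - ∏ s ∈ Finset.Icc 1 t, (1 - β s)).toNNReal := by
  have habar : ∀ t, t ≤ T → 0 < ∏ s ∈ Finset.Icc 1 t, (1 - β s) ∧
      ∏ s ∈ Finset.Icc 1 t, (1 - β s) ≤ 1 := by
    intro t ht
    constructor
    · refine Finset.prod_pos fun s hsmem => ?_
      rw [Finset.mem_Icc] at hsmem
      have := hβ s hsmem.1 (le_trans hsmem.2 ht)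
      linarith [this.2]
    · refine Finset.prod_le_one (fun s hsmem => ?_) (fun s hsmem => ?_) <;>
        rw [Finset.mem_Icc] at hsmem <;>
        have := hβ s hsmem.1 (le_trans hsmem.2 ht)
      · linarith [this.2]
      · linarith [this.1]
  have key : ∀ t, t ≤ T → Measure.map (X t) ℙ =
      gaussianReal (Real.sqrt (∏ s ∈ Finset.Icc 1 t, (1 - β s)) * x₀)
        (1 - ∏ s ∈ Finset.Icc 1 t, (1 - β s)).toNNReal := by
    intro t
    induction t with
    | zero =>
      intro _
      have h0 : Finset.Icc 1 0 = (∅ : Finset ℕ) := rfl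
      have hmap : Measure.map (X 0) ℙ = Measure.map (fun _ => x₀) ℙ :=
        Measure.map_congr (by filter_upwards [hX0] with ω h using h)
      rw [hmap, Measure.map_const, measure_univ, one_smul]
      simp [h0]
    | succ n ih =>
      intro hle
      have hn : n ≤ T := Nat.le_of_succ_le hle
      have h1n : 1 ≤ n + 1 := Nat.succ_le_succ (Nat.zero_le n)
      have hβn := hβ (n + 1) h1n hle
      have hβpos : 0 < β (n + 1) := hβn.1
      have hβlt : β (n + 1) < 1 := hβn.2
      obtain ⟨hA0, hA1⟩ := habar n hn
      set A : ℝ := ∏ s ∈ Finset.Icc 1 n, (1 - β s) with hA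
      have hprod : ∏ s ∈ Finset.Icc 1 (n + 1), (1 - β s) = A * (1 - β (n + 1)) := by
        rw [Finset.prod_Icc_succ_top h1n]
      have hXn := ih hn
      have h1 := map_const_mul' (hXmeas n) hXn (Real.sqrt (1 - β (n + 1)))
      have hE' := hE (n + 1) h1n hle
      have h2 := map_const_mul' (hEmeas (n + 1)) hE' (Real.sqrt (β (n + 1)))
      have hindn : IndepFun (X n) (E (n + 1)) ℙ := by
        have := hindep (n + 1) h1n hle
        simpa using this
      have hind' : IndepFun (fun ω => Real.sqrt (1 - β (n + 1)) * X n ω)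
          (fun ω => Real.sqrt (β (n + 1)) * E (n + 1) ω) ℙ :=
        hindn.comp (measurable_const_mul _) (measurable_const_mul _)
      have hsum := indep_sum_gaussian
        ((measurable_const_mul _).comp (hXmeas n))
        ((measurable_const_mul _).comp (hEmeas (n + 1))) h1 h2 hind'
      have hXeq : X (n + 1) = fun ω => Real.sqrt (1 - β (n + 1)) * X n ω
          + Real.sqrt (β (n + 1)) * E (n + 1) ω := by
        funext ω
        have := hrec (n + 1) h1n hle ω
        simpa using this
      have hsum2 : Measure.map (fun ω => Real.sqrt (1 - β (n + 1)) * X n ω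
          + Real.sqrt (β (n + 1)) * E (n + 1) ω) ℙ
          = gaussianReal (Real.sqrt (1 - β (n + 1)) * (Real.sqrt A * x₀)
              + Real.sqrt (β (n + 1)) * 0)
            (⟨Real.sqrt (1 - β (n + 1)) ^ 2, sq_nonneg _⟩ * (1 - A).toNNReal
              + ⟨Real.sqrt (β (n + 1)) ^ 2, sq_nonneg _⟩ * 1) := hsum
      rw [hXeq, hsum2]
      have hmean : Real.sqrt (1 - β (n + 1)) * (Real.sqrt A * x₀)
          + Real.sqrt (β (n + 1)) * 0
          = Real.sqrt (∏ s ∈ Finset.Icc 1 (n + 1), (1 - β s)) * x₀ := by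
        rw [hprod, Real.sqrt_mul hA0.le]
        ring
      have hvar : (⟨Real.sqrt (1 - β (n + 1)) ^ 2, sq_nonneg _⟩ * (1 - A).toNNReal
            + ⟨Real.sqrt (β (n + 1)) ^ 2, sq_nonneg _⟩ * 1 : ℝ≥0)
          = (1 - ∏ s ∈ Finset.Icc 1 (n + 1), (1 - β s)).toNNReal := by
        have hc2 : Real.sqrt (1 - β (n + 1)) ^ 2 = 1 - β (n + 1) :=
          Real.sq_sqrt (by linarith)
        have hd2 : Real.sqrt (β (n + 1)) ^ 2 = β (n + 1) := Real.sq_sqrt hβpos.le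
        have hAb : 0 ≤ A * (1 - β (n + 1)) := mul_nonneg hA0.le (by linarith)
        have hAb1 : A * (1 - β (n + 1)) ≤ 1 := by
          calc A * (1 - β (n + 1)) ≤ 1 * 1 :=
            mul_le_mul hA1 (by linarith) (by linarith) zero_le_one
          _ = 1 := one_mul 1
        apply NNReal.coe_injective
        push_cast
        show Real.sqrt (1 - β (n + 1)) ^ 2 * ((1 - A).toNNReal : ℝ)
            + Real.sqrt (β (n + 1)) ^ 2 * ((1 : ℝ≥0) : ℝ)
            = ((1 - ∏ s ∈ Finset.Icc 1 (n + 1), (1 - β s)).toNNReal : ℝ)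
        rw [NNReal.coe_one, hc2, hd2, Real.coe_toNNReal _ (by linarith : (0:ℝ) ≤ 1 - A),
          Real.coe_toNNReal _ (by rw [hprod]; linarith : (0:ℝ) ≤ 1 - ∏ s ∈ Finset.Icc 1 (n + 1), (1 - β s)),
          hprod]
        ring
      rw [hmean, hvar]
  intro t h1t hTt
  exact key t hTt
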